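/- Let T be the tree obtained from j+1 disjoint copies of P₃ (j ≥ 0) by fixing a leaf v_e in one copy and joining v_e to a leaf of each of the other j copies. Then T has exactly 3^j + j + 2 maximum dissociation sets, and exactly 3^j of them do not contain v_e. -/

import Mathlib

open Finset

variable {V : Type*} [Fintype V] [DecidableEq V]

/-- `F` is a dissociation set: it induces a subgraph of maximum degree at most 1,
i.e. every vertex of `F` has at most one neighbor in `F`. -/
def IsDissoc (G : SimpleGraph V) (F : Finset V) : Prop :=
  ∀ v ∈ F, ∀ u ∈ F, ∀ w ∈ F, G.Adj v u → G.Adj v w → u = w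

open Classical in
/-- The dissociation number: maximum cardinality of a dissociation set. -/
noncomputable def dissocNum (G : SimpleGraph V) : ℕ :=
  (Finset.univ.filter fun F : Finset V => IsDissoc G F).sup Finset.card

/-- A maximum dissociation set. -/
def IsMaxDissoc (G : SimpleGraph V) (F : Finset V) : Prop :=
  IsDissoc G F ∧ F.card = dissocNum G

open Classical in
/-- The number of maximum dissociation sets. -/
noncomputable def numMaxDissoc (G : SimpleGraph V) : ℕ :=
  (Finset.univ.filter fun F : Finset V => IsMaxDissoc G F).card

/-- Vertices of the tree built from `(j+1)P₃`: the fixed path `c 0 – c 1 – c 2`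
(with leaf `v_e = c 0`) and `j` paths `p i 0 – p i 1 – p i 2`. -/
inductive T2V (j : ℕ)
  | c : Fin 3 → T2V j
  | p : Fin j → Fin 3 → T2V j
  deriving DecidableEq, Fintype

/-- The tree obtained from `(j+1)P₃` by joining the leaf `c 0` of the fixed `P₃`
to the leaf `p i 0` of each of the other `j` copies. -/
def T2 (j : ℕ) : SimpleGraph (T2V j) :=
  SimpleGraph.fromRel fun x y =>
    (x = T2V.c 0 ∧ y = T2V.c 1) ∨ (x = T2V.c 1 ∧ y = T2V.c 2) ∨
    (∃ i, x = T2V.c 0 ∧ y = T2V.p i 0) ∨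
    (∃ i, x = T2V.p i 0 ∧ y = T2V.p i 1) ∨
    (∃ i, x = T2V.p i 1 ∧ y = T2V.p i 2)

namespace T2aux
open T2V
variable {j : ℕ}

lemma adj_c0 {u : T2V j} : (T2 j).Adj (c 0) u ↔ u = c 1 ∨ ∃ i, u = p i 0 := by
  simp [T2, SimpleGraph.fromRel_adj]; aesop
lemma adj_c1 {u : T2V j} : (T2 j).Adj (c 1) u ↔ u = c 0 ∨ u = c 2 := by
  simp [T2, SimpleGraph.fromRel_adj]; aesop
lemma adj_c2 {u : T2V j} : (T2 j).Adj (c 2) u ↔ u = c 1 := by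
  simp [T2, SimpleGraph.fromRel_adj]; aesop
lemma adj_p0 {i : Fin j} {u : T2V j} : (T2 j).Adj (p i 0) u ↔ u = c 0 ∨ u = p i 1 := by
  simp [T2, SimpleGraph.fromRel_adj]; aesop
lemma adj_p1 {i : Fin j} {u : T2V j} : (T2 j).Adj (p i 1) u ↔ u = p i 0 ∨ u = p i 2 := by
  simp [T2, SimpleGraph.fromRel_adj]; aesop
lemma adj_p2 {i : Fin j} {u : T2V j} : (T2 j).Adj (p i 2) u ↔ u = p i 1 := by
  simp [T2, SimpleGraph.fromRel_adj]; aesop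

lemma fin3 (k : Fin 3) : k = 0 ∨ k = 1 ∨ k = 2 := by omega

def idx : T2V j → Option (Fin j)
  | .c _ => none
  | .p i _ => some i

def slot : T2V j → Fin 3
  | .c k => k
  | .p _ k => k

def vert : Option (Fin j) → Fin 3 → T2V j
  | none, k => .c k
  | some i, k => .p i k

@[simp] lemma idx_c (k : Fin 3) : idx (c (j := j) k) = none := rfl
@[simp] lemma idx_p (i : Fin j) (k : Fin 3) : idx (p i k) = some i := rfl
@[simp] lemma slot_c (k : Fin 3) : slot (c (j := j) k) = k := rfl
@[simp] lemma slot_p (i : Fin j) (k : Fin 3) : slot (p i k) = k := rfl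
@[simp] lemma vert_none (k : Fin 3) : vert (j := j) none k = c k := rfl
@[simp] lemma vert_some (i : Fin j) (k : Fin 3) : vert (some i) k = p i k := rfl

@[simp] lemma vert_idx_slot (v : T2V j) : vert (idx v) (slot v) = v := by cases v <;> rfl

@[simp] lemma vert_inj {o o' : Option (Fin j)} {k k' : Fin 3} :
    vert o k = vert o' k' ↔ o = o' ∧ k = k' := by
  cases o <;> cases o' <;> simp [vert]

lemma vert_injective (o : Option (Fin j)) : Function.Injective (vert o) := by
  intro k k' h; exact (vert_inj.mp h).2

@[simp] lemma idx_vert (o : Option (Fin j)) (k : Fin 3) : idx (vert o k) = o := by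
  cases o <;> rfl
@[simp] lemma slot_vert (o : Option (Fin j)) (k : Fin 3) : slot (vert o k) = k := by
  cases o <;> rfl

lemma card_T2V : Fintype.card (T2V j) = 3 * j + 3 := by
  have e : T2V j ≃ Option (Fin j) × Fin 3 :=
    { toFun := fun v => (idx v, slot v)
      invFun := fun x => vert x.1 x.2
      left_inv := fun v => by cases v <;> rfl
      right_inv := fun x => by rcases x with ⟨o, k⟩; cases o <;> rfl }
  rw [Fintype.card_congr e]
  simp; ring

/-- The candidate set: omit `vert o (ω o)` from each copy `o`. -/
def Fof (ω : Option (Fin j) → Fin 3) : Finset (T2V j) :=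
  univ.filter fun v => slot v ≠ ω (idx v)

@[simp] lemma mem_Fof {ω : Option (Fin j) → Fin 3} {v : T2V j} :
    v ∈ Fof ω ↔ slot v ≠ ω (idx v) := by simp [Fof]

lemma Fof_injective : Function.Injective (Fof (j := j)) := by
  intro ω ω' h
  funext o
  have h1 : vert o (ω o) ∉ Fof ω := by simp
  rw [h, mem_Fof] at h1
  simpa using h1

lemma card_Fof (ω : Option (Fin j) → Fin 3) : (Fof ω).card = 2 * j + 2 := by
  have himg : Function.Injective fun o : Option (Fin j) => vert o (ω o) :=
    fun o o' h => (vert_inj.mp h).1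
  have hset : Fof ω = univ \ ((univ : Finset (Option (Fin j))).image fun o => vert o (ω o)) := by
    ext v
    simp only [mem_Fof, Finset.mem_sdiff, mem_univ, true_and, Finset.mem_image]
    constructor
    · rintro h ⟨o, rfl⟩
      simp at h
    · intro h
      intro hc
      exact h ⟨idx v, by rw [← hc, vert_idx_slot]⟩
  rw [hset, Finset.card_sdiff_of_subset (fun x _ => mem_univ x),
    Finset.card_image_of_injective _ himg]
  have h1 : (univ : Finset (T2V j)).card = 3 * j + 3 := by
    rw [Finset.card_univ, card_T2V]
  have h2 : (univ : Finset (Option (Fin j))).card = j + 1 := by simp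
  omega

/-- The valid patterns of omitted vertices. -/
def Valid (ω : Option (Fin j) → Fin 3) : Prop :=
  ω none = 0
  ∨ (ω none = 2 ∧ ∀ i, ω (some i) = 0)
  ∨ (ω none = 1 ∧ ((∀ i, ω (some i) = 0) ∨
      ∃ i0, ω (some i0) = 1 ∧ ∀ i', i' ≠ i0 → ω (some i') = 0))

lemma dissoc_Fof {ω : Option (Fin j) → Fin 3} (hω : Valid ω) :
    IsDissoc (T2 j) (Fof ω) := by
  intro v hv u hu w hw hadj1 hadj2
  rw [mem_Fof] at hv hu hw
  cases v with
  | c k =>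
    rcases fin3 k with rfl | rfl | rfl
    · -- v = c 0
      rw [adj_c0] at hadj1 hadj2
      rcases hω with h0 | ⟨h2, hall⟩ | ⟨h1, hsub⟩
      · exact absurd h0.symm hv
      · have hu' : u = c 1 := by
          rcases hadj1 with rfl | ⟨i, rfl⟩
          · rfl
          · exact absurd (hall i).symm hu
        have hw' : w = c 1 := by
          rcases hadj2 with rfl | ⟨i, rfl⟩
          · rfl
          · exact absurd (hall i).symm hw
        rw [hu', hw']
      · rcases hsub with hall | ⟨i0, hi0, hoth⟩
        · exfalso
          rcases hadj1 with rfl | ⟨i, rfl⟩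
          · exact hu h1.symm
          · exact hu (hall i).symm
        · have key : ∀ x : T2V j, (x = c 1 ∨ ∃ i, x = p i 0) →
              slot x ≠ ω (idx x) → x = p i0 0 := by
            rintro x (rfl | ⟨i, rfl⟩) hx
            · exact absurd h1.symm hx
            · by_cases hii : i = i0
              · rw [hii]
              · exact absurd (hoth i hii).symm hx
          rw [key u hadj1 hu, key w hadj2 hw]
    · -- v = c 1
      rw [adj_c1] at hadj1 hadj2
      rcases hω with h0 | ⟨h2, -⟩ | ⟨h1, -⟩
      · have key : ∀ x : T2V j, (x = c 0 ∨ x = c 2) → slot x ≠ ω (idx x) → x = c 2 := by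
          rintro x (rfl | rfl) hx
          · exact absurd h0.symm hx
          · rfl
        rw [key u hadj1 hu, key w hadj2 hw]
      · have key : ∀ x : T2V j, (x = c 0 ∨ x = c 2) → slot x ≠ ω (idx x) → x = c 0 := by
          rintro x (rfl | rfl) hx
          · rfl
          · exact absurd h2.symm hx
        rw [key u hadj1 hu, key w hadj2 hw]
      · exact absurd h1.symm hv
    · -- v = c 2
      rw [adj_c2] at hadj1 hadj2
      rw [hadj1, hadj2]
  | p i k =>
    rcases fin3 k with rfl | rfl | rfl
    · -- v = p i 0
      rw [adj_p0] at hadj1 hadj2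
      rcases hω with h0 | ⟨h2, hall⟩ | ⟨h1, hsub⟩
      · have key : ∀ x : T2V j, (x = c 0 ∨ x = p i 1) → slot x ≠ ω (idx x) → x = p i 1 := by
          rintro x (rfl | rfl) hx
          · exact absurd h0.symm hx
          · rfl
        rw [key u hadj1 hu, key w hadj2 hw]
      · exact absurd (hall i).symm hv
      · rcases hsub with hall | ⟨i0, hi0, hoth⟩
        · exact absurd (hall i).symm hv
        · have hii : i = i0 := by
            by_contra hne
            exact hv (hoth i hne).symm
          subst hii
          have key : ∀ x : T2V j, (x = c 0 ∨ x = p i 1) → slot x ≠ ω (idx x) → x = c 0 := by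
            rintro x (rfl | rfl) hx
            · rfl
            · exact absurd hi0.symm hx
          rw [key u hadj1 hu, key w hadj2 hw]
    · -- v = p i 1
      rw [adj_p1] at hadj1 hadj2
      rcases fin3 (ω (some i)) with hk | hk | hk
      · have key : ∀ x : T2V j, (x = p i 0 ∨ x = p i 2) → slot x ≠ ω (idx x) → x = p i 2 := by
          rintro x (rfl | rfl) hx
          · exact absurd hk.symm hx
          · rfl
        rw [key u hadj1 hu, key w hadj2 hw]
      · exact absurd hk.symm hv
      · have key : ∀ x : T2V j, (x = p i 0 ∨ x = p i 2) → slot x ≠ ω (idx x) → x = p i 0 := by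
          rintro x (rfl | rfl) hx
          · rfl
          · exact absurd hk.symm hx
        rw [key u hadj1 hu, key w hadj2 hw]
    · -- v = p i 2
      rw [adj_p2] at hadj1 hadj2
      rw [hadj1, hadj2]

lemma adj_vert01 (o : Option (Fin j)) : (T2 j).Adj (vert o 1) (vert o 0) := by
  cases o with
  | none => exact adj_c1.mpr (Or.inl rfl)
  | some i => exact adj_p1.mpr (Or.inl rfl)

lemma adj_vert12 (o : Option (Fin j)) : (T2 j).Adj (vert o 1) (vert o 2) := by
  cases o with
  | none => exact adj_c1.mpr (Or.inr rfl)
  | some i => exact adj_p1.mpr (Or.inr rfl)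

lemma card_filter_le (F : Finset (T2V j)) (hd : IsDissoc (T2 j) F) (o : Option (Fin j)) :
    ((univ : Finset (Fin 3)).filter fun k => vert o k ∈ F).card ≤ 2 := by
  by_contra h
  push_neg at h
  have hall : ∀ k : Fin 3, vert o k ∈ F := by
    have hc : ((univ : Finset (Fin 3)).filter fun k => vert o k ∈ F).card = 3 := by
      have := Finset.card_filter_le (univ : Finset (Fin 3)) (fun k => vert o k ∈ F)
      simp only [Finset.card_univ, Fintype.card_fin] at this
      omega
    have heq : ((univ : Finset (Fin 3)).filter fun k => vert o k ∈ F) = univ := by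
      apply Finset.eq_univ_of_card
      simpa using hc
    intro k
    have : k ∈ (univ : Finset (Fin 3)).filter fun k => vert o k ∈ F := by
      rw [heq]; exact mem_univ k
    exact (Finset.mem_filter.mp this).2
  have := hd (vert o 1) (hall 1) (vert o 0) (hall 0) (vert o 2) (hall 2)
    (adj_vert01 o) (adj_vert12 o)
  rw [vert_inj] at this
  exact absurd this.2 (by decide)

lemma card_eq_sum (F : Finset (T2V j)) :
    F.card = ∑ o : Option (Fin j),
      ((univ : Finset (Fin 3)).filter fun k => vert o k ∈ F).card := by
  rw [Finset.card_eq_sum_card_fiberwise (f := idx) (t := univ) (fun x _ => mem_univ _)]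
  apply Finset.sum_congr rfl
  intro o _
  apply Finset.card_bij (fun v _ => slot v)
  · rintro v hv
    simp only [Finset.mem_filter, mem_univ, true_and]
    obtain ⟨hvF, hvo⟩ := Finset.mem_filter.mp hv
    rwa [← hvo, vert_idx_slot]
  · rintro v hv v' hv' h
    obtain ⟨-, hvo⟩ := Finset.mem_filter.mp hv
    obtain ⟨-, hvo'⟩ := Finset.mem_filter.mp hv'
    rw [← vert_idx_slot v, ← vert_idx_slot v', hvo, hvo', h]
  · intro k hk
    simp only [Finset.mem_filter, mem_univ, true_and] at hk
    exact ⟨vert o k, Finset.mem_filter.mpr ⟨hk, by simp⟩, by simp⟩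

lemma card_le (F : Finset (T2V j)) (hd : IsDissoc (T2 j) F) : F.card ≤ 2 * j + 2 := by
  rw [card_eq_sum]
  calc ∑ o : Option (Fin j), ((univ : Finset (Fin 3)).filter fun k => vert o k ∈ F).card
      ≤ ∑ _o : Option (Fin j), 2 := Finset.sum_le_sum fun o _ => card_filter_le F hd o
    _ = 2 * j + 2 := by
        simp [Finset.sum_const, Finset.card_univ]
        ring

lemma exists_omega (F : Finset (T2V j)) (hd : IsDissoc (T2 j) F) (hc : F.card = 2 * j + 2) :
    ∃ ω, Valid ω ∧ F = Fof ω := by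
  -- each fiber has exactly 2 elements
  have heq2 : ∀ o : Option (Fin j),
      ((univ : Finset (Fin 3)).filter fun k => vert o k ∈ F).card = 2 := by
    intro o
    by_contra h
    have hlt : ((univ : Finset (Fin 3)).filter fun k => vert o k ∈ F).card < 2 :=
      lt_of_le_of_ne (card_filter_le F hd o) h
    have hslt : ∑ o' : Option (Fin j),
        ((univ : Finset (Fin 3)).filter fun k => vert o' k ∈ F).card
        < ∑ _o' : Option (Fin j), 2 :=
      Finset.sum_lt_sum (fun o' _ => card_filter_le F hd o') ⟨o, mem_univ o, hlt⟩
    rw [← card_eq_sum, hc] at hslt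
    simp only [Finset.sum_const, Finset.card_univ, Fintype.card_option,
      Fintype.card_fin, smul_eq_mul] at hslt
    omega
  have hone : ∀ o : Option (Fin j),
      ∃ a, ((univ : Finset (Fin 3)).filter fun k => vert o k ∉ F) = {a} := by
    intro o
    rw [← Finset.card_eq_one]
    have := Finset.card_filter_add_card_filter_not
      (s := (univ : Finset (Fin 3))) (p := fun k => vert o k ∈ F)
    rw [heq2 o] at this
    simp only [Finset.card_univ, Fintype.card_fin] at this
    have he : ((univ : Finset (Fin 3)).filter fun k => vert o k ∉ F) =
        ((univ : Finset (Fin 3)).filter fun k => ¬ vert o k ∈ F) := rfl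
    omega
  choose ω hω using hone
  have hmem : ∀ (o : Option (Fin j)) (k : Fin 3), vert o k ∈ F ↔ k ≠ ω o := by
    intro o k
    constructor
    · intro hk hkω
      have : k ∈ ((univ : Finset (Fin 3)).filter fun k => vert o k ∉ F) := by
        rw [hω o, hkω]; exact Finset.mem_singleton_self _
      exact (Finset.mem_filter.mp this).2 hk
    · intro hkω
      by_contra hk
      have : k ∈ ((univ : Finset (Fin 3)).filter fun k => vert o k ∉ F) :=
        Finset.mem_filter.mpr ⟨mem_univ _, hk⟩
      rw [hω o, Finset.mem_singleton] at this
      exact hkω this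
  refine ⟨ω, ?_, ?_⟩
  · -- validity
    have hmemc : ∀ k : Fin 3, c (j := j) k ∈ F ↔ k ≠ ω none := fun k => hmem none k
    have hmemp : ∀ (i : Fin j) (k : Fin 3), p i k ∈ F ↔ k ≠ ω (some i) :=
      fun i k => hmem (some i) k
    rcases fin3 (ω none) with h0 | h1 | h2
    · exact Or.inl h0
    · -- ω none = 1
      refine Or.inr (Or.inr ⟨h1, ?_⟩)
      have hc0 : c (j := j) 0 ∈ F := (hmemc 0).mpr (by rw [h1]; decide)
      have hone' : ∀ i : Fin j, ω (some i) = 0 ∨ ω (some i) = 1 := by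
        intro i
        rcases fin3 (ω (some i)) with h | h | h
        · exact Or.inl h
        · exact Or.inr h
        · exfalso
          have hp0 : p i 0 ∈ F := (hmemp i 0).mpr (by rw [h]; decide)
          have hp1 : p i 1 ∈ F := (hmemp i 1).mpr (by rw [h]; decide)
          have := hd (p i 0) hp0 (c 0) hc0 (p i 1) hp1
            (adj_p0.mpr (Or.inl rfl)) (adj_p0.mpr (Or.inr rfl))
          simp at this
      have huniq : ∀ i i' : Fin j, ω (some i) = 1 → ω (some i') = 1 → i = i' := by
        intro i i' hi hi'
        have hp : p i 0 ∈ F := (hmemp i 0).mpr (by rw [hi]; decide)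
        have hp' : p i' 0 ∈ F := (hmemp i' 0).mpr (by rw [hi']; decide)
        have := hd (c 0) hc0 (p i 0) hp (p i' 0) hp'
          (adj_c0.mpr (Or.inr ⟨i, rfl⟩)) (adj_c0.mpr (Or.inr ⟨i', rfl⟩))
        simpa using this
      by_cases hex : ∃ i0, ω (some i0) = 1
      · obtain ⟨i0, hi0⟩ := hex
        exact Or.inr ⟨i0, hi0, fun i' hne =>
          (hone' i').resolve_right fun h => hne (huniq i' i0 h hi0)⟩
      · exact Or.inl fun i => (hone' i).resolve_right fun h => hex ⟨i, h⟩
    · -- ω none = 2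
      refine Or.inr (Or.inl ⟨h2, ?_⟩)
      intro i
      by_contra hne
      have hp0 : p i 0 ∈ F := (hmemp i 0).mpr (Ne.symm hne)
      have hc0 : c (j := j) 0 ∈ F := (hmemc 0).mpr (by rw [h2]; decide)
      have hc1 : c (j := j) 1 ∈ F := (hmemc 1).mpr (by rw [h2]; decide)
      have := hd (c 0) hc0 (c 1) hc1 (p i 0) hp0
        (adj_c0.mpr (Or.inl rfl)) (adj_c0.mpr (Or.inr ⟨i, rfl⟩))
      simp at this
  · -- F = Fof ω
    ext v
    rw [mem_Fof, ← vert_idx_slot v, hmem (idx v) (slot v)]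
    simp

lemma dissocNum_T2 : dissocNum (T2 j) = 2 * j + 2 := by
  classical
  unfold dissocNum
  apply le_antisymm
  · apply Finset.sup_le
    intro F hF
    exact card_le F (Finset.mem_filter.mp hF).2
  · have hmem : Fof (j := j) (fun _ => 0) ∈
        (Finset.univ.filter fun F : Finset (T2V j) => IsDissoc (T2 j) F) :=
      Finset.mem_filter.mpr ⟨mem_univ _, dissoc_Fof (Or.inl rfl)⟩
    calc 2 * j + 2 = (Fof (j := j) fun _ => 0).card := (card_Fof _).symm
      _ ≤ _ := Finset.le_sup hmem

lemma maxdissoc_iff (F : Finset (T2V j)) :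
    IsMaxDissoc (T2 j) F ↔ ∃ ω, Valid ω ∧ F = Fof ω := by
  constructor
  · rintro ⟨hd, hc⟩
    exact exists_omega F hd (by rw [hc, dissocNum_T2])
  · rintro ⟨ω, hω, rfl⟩
    exact ⟨dissoc_Fof hω, by rw [card_Fof, dissocNum_T2]⟩

/-- Pattern families -/
def ωA (f : Fin j → Fin 3) : Option (Fin j) → Fin 3 := fun o => o.casesOn 0 f
def ωB : Option (Fin j) → Fin 3 := fun o => o.casesOn 2 fun _ => 0
def ωC : Option (Fin j) → Fin 3 := fun o => o.casesOn 1 fun _ => 0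
def ωD (i0 : Fin j) : Option (Fin j) → Fin 3 :=
  fun o => o.casesOn 1 fun i => if i = i0 then 1 else 0

lemma validA (f : Fin j → Fin 3) : Valid (ωA f) := Or.inl rfl
lemma validB : Valid (ωB (j := j)) := Or.inr (Or.inl ⟨rfl, fun _ => rfl⟩)
lemma validC : Valid (ωC (j := j)) := Or.inr (Or.inr ⟨rfl, Or.inl fun _ => rfl⟩)
lemma validD (i0 : Fin j) : Valid (ωD i0) :=
  Or.inr (Or.inr ⟨rfl, Or.inr ⟨i0, by simp [ωD], fun i' h => by simp [ωD, h]⟩⟩)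

lemma valid_cases {ω : Option (Fin j) → Fin 3} (h : Valid ω) :
    (∃ f, ω = ωA f) ∨ ω = ωB ∨ ω = ωC ∨ ∃ i0, ω = ωD i0 := by
  rcases h with h0 | ⟨h2, hall⟩ | ⟨h1, hall | ⟨i0, hi0, hoth⟩⟩
  · refine Or.inl ⟨fun i => ω (some i), funext fun o => ?_⟩
    cases o with
    | none => exact h0
    | some i => rfl
  · refine Or.inr (Or.inl (funext fun o => ?_))
    cases o with
    | none => exact h2
    | some i => exact hall i
  · refine Or.inr (Or.inr (Or.inl (funext fun o => ?_)))
    cases o with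
    | none => exact h1
    | some i => exact hall i
  · refine Or.inr (Or.inr (Or.inr ⟨i0, funext fun o => ?_⟩))
    cases o with
    | none => exact h1
    | some i =>
      by_cases hii : i = i0
      · subst hii; simp [ωD, hi0]
      · simp [ωD, hii, hoth i hii]

lemma ωA_injective : Function.Injective (ωA (j := j)) := by
  intro f f' h
  funext i
  exact congrFun h (some i)

lemma ωD_injective : Function.Injective (ωD (j := j)) := by
  intro i i' h
  have := congrFun h (some i)
  simp [ωD] at this
  by_contra hne
  exact hne this

end T2aux

open T2aux

open Classical in
/-- The tree `T2 j` has exactly `3^j + j + 2` maximum dissociation sets, of which exactly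
`3^j` do not contain the vertex `v_e = c 0`. -/
theorem stmt_11 (j : ℕ) :
    numMaxDissoc (T2 j) = 3 ^ j + j + 2 ∧
      (Finset.univ.filter fun F : Finset (T2V j) =>
          IsMaxDissoc (T2 j) F ∧ T2V.c 0 ∉ F).card = 3 ^ j := by
  classical
  -- the four families
  set A : Finset (Finset (T2V j)) := (univ : Finset (Fin j → Fin 3)).image fun f => Fof (ωA f)
    with hA
  set B : Finset (Finset (T2V j)) := {Fof (j := j) ωB} with hB
  set C : Finset (Finset (T2V j)) := {Fof (j := j) ωC} with hC
  set D : Finset (Finset (T2V j)) := (univ : Finset (Fin j)).image fun i => Fof (ωD i) with hD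
  have hMD : ∀ F : Finset (T2V j), IsMaxDissoc (T2 j) F ↔ F ∈ A ∪ B ∪ C ∪ D := by
    intro F
    rw [maxdissoc_iff]
    simp only [hA, hB, hC, hD, Finset.mem_union, Finset.mem_image, Finset.mem_singleton,
      mem_univ, true_and]
    constructor
    · rintro ⟨ω, hω, rfl⟩
      rcases valid_cases hω with ⟨f, rfl⟩ | rfl | rfl | ⟨i0, rfl⟩
      · exact Or.inl (Or.inl (Or.inl ⟨f, rfl⟩))
      · exact Or.inl (Or.inl (Or.inr rfl))
      · exact Or.inl (Or.inr rfl)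
      · exact Or.inr ⟨i0, rfl⟩
    · rintro (((⟨f, rfl⟩ | rfl) | rfl) | ⟨i0, rfl⟩)
      · exact ⟨ωA f, validA f, rfl⟩
      · exact ⟨ωB, validB, rfl⟩
      · exact ⟨ωC, validC, rfl⟩
      · exact ⟨ωD i0, validD i0, rfl⟩
  -- cards
  have hcardA : A.card = 3 ^ j := by
    rw [hA, Finset.card_image_of_injective _ (fun f f' h => ωA_injective (Fof_injective h))]
    simp
  have hcardD : D.card = j := by
    rw [hD, Finset.card_image_of_injective _ (fun i i' h => ωD_injective (Fof_injective h))]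
    simp
  -- disjointness, via injectivity of Fof
  have hnotA : ∀ (ω : Option (Fin j) → Fin 3), ω none ≠ 0 → Fof ω ∉ A := by
    intro ω hω hmem
    rw [hA, Finset.mem_image] at hmem
    obtain ⟨f, -, hf⟩ := hmem
    exact hω (by rw [← Fof_injective hf]; rfl)
  have hdAB : Disjoint A B := by
    rw [Finset.disjoint_right, hB]
    intro F hF
    rw [Finset.mem_singleton] at hF
    subst hF
    exact hnotA ωB (show (2:Fin 3) ≠ 0 by decide)
  have hdABC : Disjoint (A ∪ B) C := by
    rw [Finset.disjoint_right, hC]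
    intro F hF
    rw [Finset.mem_singleton] at hF
    subst hF
    rw [Finset.mem_union, hB, Finset.mem_singleton]
    rintro (h | h)
    · exact hnotA ωC (show (1:Fin 3) ≠ 0 by decide) h
    · have h12 : (1 : Fin 3) = 2 := congrFun (Fof_injective h) none
      exact absurd h12 (by decide)
  have hdABCD : Disjoint (A ∪ B ∪ C) D := by
    rw [Finset.disjoint_right, hD]
    intro F hF
    rw [Finset.mem_image] at hF
    obtain ⟨i0, -, rfl⟩ := hF
    rw [Finset.mem_union, Finset.mem_union, hB, hC, Finset.mem_singleton, Finset.mem_singleton]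
    rintro ((h | h) | h)
    · exact hnotA (ωD i0) (show (1:Fin 3) ≠ 0 by decide) h
    · have h12 : (1 : Fin 3) = 2 := congrFun (Fof_injective h) none
      exact absurd h12 (by decide)
    · have h10 : (1 : Fin 3) = 0 := by
        simpa [ωD, ωC] using congrFun (Fof_injective h) (some i0)
      exact absurd h10 (by decide)
  have hcardU : (A ∪ B ∪ C ∪ D).card = 3 ^ j + j + 2 := by
    rw [Finset.card_union_of_disjoint hdABCD, Finset.card_union_of_disjoint hdABC,
      Finset.card_union_of_disjoint hdAB, hcardA, hcardD, hB, hC,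
      Finset.card_singleton, Finset.card_singleton]
    ring
  constructor
  · have : numMaxDissoc (T2 j) = (A ∪ B ∪ C ∪ D).card := by
      unfold numMaxDissoc
      congr 1
      ext F
      simp only [Finset.mem_filter, mem_univ, true_and]
      exact hMD F
    rw [this, hcardU]
  · have hfe : (Finset.univ.filter fun F : Finset (T2V j) =>
        IsMaxDissoc (T2 j) F ∧ T2V.c 0 ∉ F) = A := by
      ext F
      simp only [Finset.mem_filter, mem_univ, true_and]
      constructor
      · rintro ⟨hmax, hc0⟩
        obtain ⟨ω, hω, rfl⟩ := (maxdissoc_iff F).mp hmax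
        have h0 : ω none = 0 := by
          by_contra h
          exact hc0 (mem_Fof.mpr (fun hh => h (by simpa using hh.symm)))
        have : ω = ωA fun i => ω (some i) := by
          funext o
          cases o with
          | none => exact h0
          | some i => rfl
        rw [this, hA, Finset.mem_image]
        exact ⟨_, mem_univ _, rfl⟩
      · intro hFA
        rw [hA, Finset.mem_image] at hFA
        obtain ⟨f, -, rfl⟩ := hFA
        refine ⟨(maxdissoc_iff _).mpr ⟨ωA f, validA f, rfl⟩, ?_⟩
        rw [mem_Fof]
        simp [ωA]
    rw [hfe, hcardA]
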